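/- For third-order tensors A ∈ ℝ^{m×n×p} and B ∈ ℝ^{n×s×p}, the block circulant matrix of their T-product equals the product of their block circulant matrices: bcirc(A * B) = bcirc(A) · bcirc(B). -/
import Mathlib

open Matrix

/-- The block circulant matrix of a third-order tensor, given by its frontal slices. -/
def bcirc {m n p : ℕ} (A : Fin p → Matrix (Fin m) (Fin n) ℝ) :
    Matrix (Fin p × Fin m) (Fin p × Fin n) ℝ :=
  fun ki lj => A (ki.1 - lj.1) ki.2 lj.2

/-- The unfold operator, stacking the frontal slices vertically. -/
def unfold {n s p : ℕ} (B : Fin p → Matrix (Fin n) (Fin s) ℝ) :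
    Matrix (Fin p × Fin n) (Fin s) ℝ :=
  fun ki j => B ki.1 ki.2 j

/-- The T-product of third-order tensors: A * B = fold(bcirc(A) · unfold(B)). -/
def tProd {m n s p : ℕ} (A : Fin p → Matrix (Fin m) (Fin n) ℝ)
    (B : Fin p → Matrix (Fin n) (Fin s) ℝ) : Fin p → Matrix (Fin m) (Fin s) ℝ :=
  fun k i j => (bcirc A * unfold B) (k, i) j

/-- bcirc(A * B) = bcirc(A) · bcirc(B). -/
theorem bcirc_tprod {m n s p : ℕ} (A : Fin p → Matrix (Fin m) (Fin n) ℝ)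
    (B : Fin p → Matrix (Fin n) (Fin s) ℝ) :
    bcirc (tProd A B) = bcirc A * bcirc B := by
  cases p with
  | zero => ext ⟨k, i⟩; exact k.elim0
  | succ q =>
    ext ⟨k, i⟩ ⟨l, j⟩
    simp only [bcirc, tProd, Matrix.mul_apply, unfold, Fintype.sum_prod_type]
    refine Fintype.sum_equiv (Equiv.addRight l) _ _ fun a => ?_
    simp only [Equiv.coe_addRight]
    rw [add_sub_cancel_right, sub_add_eq_sub_sub_swap]
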